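/- (Proposition 1, single-interval form.) Let α > 0 and let t₀ ≤ a < b be real numbers. Let c₀, c_a, c_b be reals with 0 < c₀ ≤ 1, 0 < c_a ≤ 1, 0 < c_b ≤ 1, and suppose e^{-α(a-t₀)}·c_a ≤ c₀ and e^{-α(b-t₀)}·c_b ≤ c₀. For t ∈ [a, b] define λm(t) := (b - t)/(b - a), λp(t) := (t - a)/(b - a), and c(t) := (c_a·c_b)/(λm(t)·c_b + λp(t)·c_a). Then for every t ∈ [a, b], 1/c(t) ≥ max{ 1, e^{-α(t-t₀)}/c₀ }. -/

import Mathlib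

/-- Proposition 1, single-interval form: the piecewise-linear-in-`1/c`
interpolation satisfies the continuous-time support condition
`1/c(t) ≥ max {1, exp(-α(t-t₀))/c₀}` on `[a, b]`. -/
theorem prop1_single_interval
    (α t₀ a b : ℝ) (hα : 0 < α) (h₀a : t₀ ≤ a) (hab : a < b)
    (c₀ c_a c_b : ℝ)
    (hc₀ : 0 < c₀) (hc₀1 : c₀ ≤ 1)
    (hca : 0 < c_a) (hca1 : c_a ≤ 1)
    (hcb : 0 < c_b) (hcb1 : c_b ≤ 1)
    (hea : Real.exp (-α * (a - t₀)) * c_a ≤ c₀)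
    (heb : Real.exp (-α * (b - t₀)) * c_b ≤ c₀)
    (lm lp c : ℝ → ℝ)
    (hlm : ∀ t, lm t = (b - t) / (b - a))
    (hlp : ∀ t, lp t = (t - a) / (b - a))
    (hc : ∀ t, c t = (c_a * c_b) / (lm t * c_b + lp t * c_a)) :
    ∀ t ∈ Set.Icc a b,
      1 / c t ≥ max 1 (Real.exp (-α * (t - t₀)) / c₀) := by
  intro t ht
  obtain ⟨hta, htb⟩ := ht
  have hba : (0:ℝ) < b - a := by linarith
  have hlm0 : 0 ≤ lm t := by rw [hlm]; apply div_nonneg <;> linarith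
  have hlp0 : 0 ≤ lp t := by rw [hlp]; apply div_nonneg <;> linarith
  have hsum : lm t + lp t = 1 := by
    rw [hlm, hlp]; field_simp; ring
  have hD : 0 < lm t * c_b + lp t * c_a := by
    rcases eq_or_lt_of_le hlm0 with h | h
    · have : lp t = 1 := by linarith
      rw [← h, this]; nlinarith
    · nlinarith
  have hinv : 1 / c t = lm t / c_a + lp t / c_b := by
    rw [hc, one_div, inv_div]
    field_simp
  rw [hinv, ge_iff_le, max_le_iff]
  constructor
  · -- 1 ≤ lm/c_a + lp/c_b
    have h1 : 1 ≤ 1 / c_a := by rw [le_div_iff₀ hca]; linarith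
    have h2 : 1 ≤ 1 / c_b := by rw [le_div_iff₀ hcb]; linarith
    have := add_le_add (mul_le_mul_of_nonneg_left h1 hlm0)
      (mul_le_mul_of_nonneg_left h2 hlp0)
    calc (1:ℝ) = lm t * 1 + lp t * 1 := by rw [mul_one, mul_one, hsum]
    _ ≤ lm t * (1/c_a) + lp t * (1/c_b) := this
    _ = lm t / c_a + lp t / c_b := by ring
  · -- exp convexity part
    have hta' : -α * (t - t₀) = lm t * (-α * (a - t₀)) + lp t * (-α * (b - t₀)) := by
      rw [hlm, hlp]; field_simp; ring
    have hconv : Real.exp (-α * (t - t₀)) ≤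
        lm t * Real.exp (-α * (a - t₀)) + lp t * Real.exp (-α * (b - t₀)) := by
      rw [hta']
      simpa using convexOn_exp.2 (Set.mem_univ (-α * (a - t₀)))
        (Set.mem_univ (-α * (b - t₀))) hlm0 hlp0 hsum
    have hea' : Real.exp (-α * (a - t₀)) ≤ c₀ / c_a := by
      rw [le_div_iff₀ hca]; exact hea
    have heb' : Real.exp (-α * (b - t₀)) ≤ c₀ / c_b := by
      rw [le_div_iff₀ hcb]; exact heb
    have key : Real.exp (-α * (t - t₀)) ≤ c₀ * (lm t / c_a + lp t / c_b) := by
      calc Real.exp (-α * (t - t₀))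
          ≤ lm t * Real.exp (-α * (a - t₀)) + lp t * Real.exp (-α * (b - t₀)) := hconv
        _ ≤ lm t * (c₀ / c_a) + lp t * (c₀ / c_b) :=
            add_le_add (mul_le_mul_of_nonneg_left hea' hlm0)
              (mul_le_mul_of_nonneg_left heb' hlp0)
        _ = c₀ * (lm t / c_a + lp t / c_b) := by ring
    rw [div_le_iff₀ hc₀]
    linarith
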